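/- Let V₁ be the affine ℤ-VASS of dimension 2 with a single control-state p and transitions (p, 𝟙, 0, p), (p, I, e₁, p), (p, I, −e₁, p), (p, I, e₂, p), (p, I, −e₂, p), where 𝟙 is the 2×2 all-ones matrix and e₁, e₂ are the unit vectors of ℤ². Then p(u) →* p(v) for all u, v ∈ ℤ²; in particular, the reachability relation of V₁ is all of ℤ² × ℤ² and hence semilinear, even though the monoid M_{V₁} is infinite. -/

import Mathlib

/-- An affine ℤ-VASS of dimension `d` with control-states `Q` and transitions `T`:
each transition `t` has a source state, a target state, a matrix `A(t)` and a vector `b(t)`. -/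
structure AffineZVASS (d : ℕ) (Q : Type) (T : Type) where
  src : T → Q
  tgt : T → Q
  mat : T → Matrix (Fin d) (Fin d) ℤ
  vec : T → (Fin d → ℤ)

namespace AffineZVASS

variable {d : ℕ} {Q T : Type}

/-- One step along transition `t`: from `src t (u)` to `tgt t (A(t)·u + b(t))`. -/
def Step (V : AffineZVASS d Q T) (t : T) (c c' : Q × (Fin d → ℤ)) : Prop :=
  c.1 = V.src t ∧ c' = (V.tgt t, (V.mat t).mulVec c.2 + V.vec t)

/-- `V.StepWord w c c'` : `c →_w c'`. -/
def StepWord (V : AffineZVASS d Q T) : List T → (Q × (Fin d → ℤ)) → (Q × (Fin d → ℤ)) → Prop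
  | [], c, c' => c = c'
  | t :: w, c, c' => ∃ c'', V.Step t c c'' ∧ V.StepWord w c'' c'

/-- Reachability: `c →* c'`. -/
def Reach (V : AffineZVASS d Q T) (c c' : Q × (Fin d → ℤ)) : Prop :=
  ∃ w : List T, V.StepWord w c c'

/-- `w` is a path from `p` to `q` in the underlying graph of `V`. -/
def IsPath (V : AffineZVASS d Q T) : List T → Q → Q → Prop
  | [], p, q => p = q
  | t :: w, p, q => V.src t = p ∧ V.IsPath w (V.tgt t) q

/-- The effect `w(u)` of a word of transitions on a counter vector:
`ε(u) = u` and `(wt)(u) = A(t)·(w(u)) + b(t)`. -/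
def eff (V : AffineZVASS d Q T) : List T → (Fin d → ℤ) → (Fin d → ℤ)
  | [], u => u
  | t :: w, u => V.eff w ((V.mat t).mulVec u + V.vec t)

/-- The matrix `M(w)`: `M(ε) = I` and `M(wt) = A(t)·M(w)`. -/
def Mword (V : AffineZVASS d Q T) : List T → Matrix (Fin d) (Fin d) ℤ
  | [] => 1
  | t :: w => V.Mword w * V.mat t

end AffineZVASS

namespace AffineZVASS

/-- The `d×d` all-ones matrix `𝟙`. -/
def allOnes (d : ℕ) : Matrix (Fin d) (Fin d) ℤ :=
  Matrix.of fun _ _ => 1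

/-- The vector `(x, y) ∈ ℤ^{2d}`. -/
def concatVec {d : ℕ} (x y : Fin d → ℤ) : Fin (2 * d) → ℤ := fun i =>
  if h : (i : ℕ) < d then x ⟨i, h⟩ else y ⟨(i : ℕ) - d, by omega⟩

end AffineZVASS

/-- A linear subset of `ℤ^k`: `{b + n₁·p₁ + ⋯ + n_m·p_m : n₁, …, n_m ∈ ℕ}`. -/
def IsLinearSetZ {k : ℕ} (S : Set (Fin k → ℤ)) : Prop :=
  ∃ (b : Fin k → ℤ) (m : ℕ) (per : Fin m → (Fin k → ℤ)),
    S = {x | ∃ n : Fin m → ℕ, x = b + ∑ i, (n i : ℤ) • per i}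

/-- A semilinear subset of `ℤ^k`: a finite union of linear sets. -/
def IsSemilinearSetZ {k : ℕ} (S : Set (Fin k → ℤ)) : Prop :=
  ∃ (m : ℕ) (L : Fin m → Set (Fin k → ℤ)), (∀ i, IsLinearSetZ (L i)) ∧ S = ⋃ i, L i


namespace AffineZVASS

variable {d : ℕ} {Q T : Type}

theorem reach_trans (V : AffineZVASS d Q T) {a b c : Q × (Fin d → ℤ)}
    (h1 : V.Reach a b) (h2 : V.Reach b c) : V.Reach a c := by
  obtain ⟨w1, h1⟩ := h1
  obtain ⟨w2, h2⟩ := h2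
  refine ⟨w1 ++ w2, ?_⟩
  induction w1 generalizing a with
  | nil => cases h1; exact h2
  | cons t w ih =>
      obtain ⟨c'', hst, hw⟩ := h1
      exact ⟨c'', hst, ih hw⟩

theorem reach_step (V : AffineZVASS d Q T) (t : T) (q : Q) (u : Fin d → ℤ)
    (h1 : V.src t = q) (h2 : V.tgt t = q) (h3 : V.mat t = 1) :
    V.Reach (q, u) (q, u + V.vec t) := by
  refine ⟨[t], (q, u + V.vec t), ⟨h1.symm, ?_⟩, rfl⟩
  rw [h2, h3]
  simp [Matrix.one_mulVec]

theorem reach_nsmul (V : AffineZVASS d Q T) (q : Q) (b : Fin d → ℤ)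
    (hstep : ∀ u, V.Reach (q, u) (q, u + b)) :
    ∀ (n : ℕ) (u : Fin d → ℤ), V.Reach (q, u) (q, u + (n : ℤ) • b) := by
  intro n
  induction n with
  | zero => intro u; simp only [Nat.cast_zero, zero_smul, add_zero]; exact ⟨[], rfl⟩
  | succ n ih =>
      intro u
      refine V.reach_trans (hstep u) ?_
      have := ih (u + b)
      have heq : u + b + (n : ℤ) • b = u + ((n + 1 : ℕ) : ℤ) • b := by
        push_cast
        module
      rwa [heq] at this

theorem reach_zsmul (V : AffineZVASS d Q T) (q : Q) (b : Fin d → ℤ)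
    (hp : ∀ u, V.Reach (q, u) (q, u + b))
    (hm : ∀ u, V.Reach (q, u) (q, u + (-b))) :
    ∀ (z : ℤ) (u : Fin d → ℤ), V.Reach (q, u) (q, u + z • b) := by
  intro z u
  rcases le_or_gt 0 z with h | h
  · have := V.reach_nsmul q b hp z.toNat u
    rwa [Int.toNat_of_nonneg h] at this
  · have := V.reach_nsmul q (-b) hm (-z).toNat u
    rw [Int.toNat_of_nonneg (by omega)] at this
    rwa [smul_neg, neg_smul, neg_neg] at this

end AffineZVASS

open AffineZVASS in
/-- The affine ℤ-VASS `V₁` of dimension 2 with a single control-state `p` and transitions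
`(p, 𝟙, 0, p)`, `(p, I, ±e₁, p)`, `(p, I, ±e₂, p)`: every configuration is reachable from
every configuration, so the reachability relation is all of `ℤ² × ℤ²` and hence
semilinear, even though `M_{V₁}` is infinite. -/
theorem allOnes_example_reach_univ
    (V : AffineZVASS 2 (Fin 1) (Fin 5))
    (hsrc : V.src = fun _ => 0) (htgt : V.tgt = fun _ => 0)
    (hmat : V.mat = ![allOnes 2, 1, 1, 1, 1])
    (hvec : V.vec = ![0, ![1, 0], ![-1, 0], ![0, 1], ![0, -1]]) :
    (∀ u v : Fin 2 → ℤ, V.Reach (0, u) (0, v)) ∧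
    {x : (Fin 2 → ℤ) × (Fin 2 → ℤ) | V.Reach (0, x.1) (0, x.2)} = Set.univ ∧
    IsSemilinearSetZ
      {x : Fin (2 * 2) → ℤ | ∃ u v : Fin 2 → ℤ, x = concatVec u v ∧ V.Reach (0, u) (0, v)} ∧
    (Submonoid.closure (Set.range V.mat) : Set (Matrix (Fin 2) (Fin 2) ℤ)).Infinite := by
  classical
  -- Part 1: universal reachability
  have hsrc' : ∀ t, V.src t = 0 := fun t => by rw [hsrc]
  have htgt' : ∀ t, V.tgt t = 0 := fun t => by rw [htgt]
  have hstep : ∀ (t : Fin 5), V.mat t = 1 → ∀ u, V.Reach (0, u) (0, u + V.vec t) :=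
    fun t ht u => V.reach_step t 0 u (hsrc' t) (htgt' t) ht
  have hs1 : ∀ u, V.Reach (0, u) (0, u + ![1, 0]) := fun u => by
    have := hstep 1 (by rw [hmat]; rfl) u
    rwa [show V.vec 1 = ![1, 0] by rw [hvec]; rfl] at this
  have hs2 : ∀ u, V.Reach (0, u) (0, u + -![1, 0]) := fun u => by
    have := hstep 2 (by rw [hmat]; rfl) u
    rw [show V.vec 2 = ![-1, 0] by rw [hvec]; rfl] at this
    rwa [show (![-1, 0] : Fin 2 → ℤ) = -![1, 0] by funext i; fin_cases i <;> simp] at this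
  have hs3 : ∀ u, V.Reach (0, u) (0, u + ![0, 1]) := fun u => by
    have := hstep 3 (by rw [hmat]; rfl) u
    rwa [show V.vec 3 = ![0, 1] by rw [hvec]; rfl] at this
  have hs4 : ∀ u, V.Reach (0, u) (0, u + -![0, 1]) := fun u => by
    have := hstep 4 (by rw [hmat]; rfl) u
    rw [show V.vec 4 = ![0, -1] by rw [hvec]; rfl] at this
    rwa [show (![0, -1] : Fin 2 → ℤ) = -![0, 1] by funext i; fin_cases i <;> simp] at this
  have r1 := V.reach_zsmul 0 ![1, 0] hs1 hs2
  have r2 := V.reach_zsmul 0 ![0, 1] hs3 hs4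
  have h1 : ∀ u v : Fin 2 → ℤ, V.Reach (0, u) (0, v) := by
    intro u v
    have hre := V.reach_trans (r1 (v 0 - u 0) u)
      (r2 (v 1 - u 1) (u + (v 0 - u 0) • ![1, 0]))
    have hv : u + (v 0 - u 0) • ![1, 0] + (v 1 - u 1) • ![0, 1] = v := by
      funext i
      fin_cases i <;> simp [Matrix.vecHead, Matrix.vecTail]
    rwa [hv] at hre
  refine ⟨h1, ?_, ?_, ?_⟩
  -- Part 2
  · exact Set.eq_univ_of_forall fun x => h1 x.1 x.2
  -- Part 3: semilinearity
  · have hset : {x : Fin (2 * 2) → ℤ |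
        ∃ u v : Fin 2 → ℤ, x = concatVec u v ∧ V.Reach (0, u) (0, v)} = Set.univ := by
      apply Set.eq_univ_of_forall
      intro x
      refine ⟨fun j => x ⟨j, by omega⟩, fun j => x ⟨(j : ℕ) + 2, by omega⟩, ?_, h1 _ _⟩
      funext i
      by_cases h : (i : ℕ) < 2
      · simp [concatVec, h]
      · simp only [concatVec, dif_neg h]
        congr 1
        ext
        simp
        omega
    rw [hset]
    refine ⟨1, fun _ => Set.univ, fun _ => ?_, (Set.iUnion_const _).symm⟩
    refine ⟨0, 8, ![![1,0,0,0], ![0,1,0,0], ![0,0,1,0], ![0,0,0,1],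
      ![-1,0,0,0], ![0,-1,0,0], ![0,0,-1,0], ![0,0,0,-1]], ?_⟩
    apply (Set.eq_univ_of_forall ?_).symm
    intro x
    refine ⟨![(x 0).toNat, (x 1).toNat, (x 2).toNat, (x 3).toNat,
      (-(x 0)).toNat, (-(x 1)).toNat, (-(x 2)).toNat, (-(x 3)).toNat], ?_⟩
    have e5 : ∀ {α : Type} (a b c d e f g h : α), (![a,b,c,d,e,f,g,h] : Fin 8 → α) 5 = f :=
      fun _ _ _ _ _ _ _ _ => rfl
    have e6 : ∀ {α : Type} (a b c d e f g h : α), (![a,b,c,d,e,f,g,h] : Fin 8 → α) 6 = g :=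
      fun _ _ _ _ _ _ _ _ => rfl
    have e7 : ∀ {α : Type} (a b c d e f g h : α), (![a,b,c,d,e,f,g,h] : Fin 8 → α) 7 = h :=
      fun _ _ _ _ _ _ _ _ => rfl
    funext j
    fin_cases j <;> simp [Fin.sum_univ_eight, e5, e6, e7] <;> omega
  -- Part 4: the monoid is infinite
  · have hA : allOnes 2 ∈ Set.range V.mat := ⟨0, by rw [hmat]; rfl⟩
    have hAc : allOnes 2 ∈ Submonoid.closure (Set.range V.mat) := Submonoid.subset_closure hA
    have hsq : allOnes 2 * allOnes 2 = (2 : ℤ) • allOnes 2 := by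
      ext i j
      simp [allOnes, Matrix.mul_apply, Fin.sum_univ_two]
    have hpow : ∀ n : ℕ, (allOnes 2) ^ (n + 1) = ((2 : ℤ) ^ n) • allOnes 2 := by
      intro n
      induction n with
      | zero => simp
      | succ n ih => rw [pow_succ, ih, smul_mul_assoc, hsq, smul_smul, pow_succ]
    apply Set.infinite_of_injective_forall_mem
      (f := fun n : ℕ => (allOnes 2) ^ (n + 1))
    · intro m n h
      simp only [hpow] at h
      have h2 : (2 : ℤ) ^ m = 2 ^ n := by
        simpa [allOnes] using congrArg (fun M : Matrix (Fin 2) (Fin 2) ℤ => M 0 0) h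
      have h3 : (2 : ℕ) ^ m = 2 ^ n := by exact_mod_cast h2
      exact Nat.pow_right_injective le_rfl h3
    · intro n
      exact Submonoid.pow_mem _ hAc (n + 1)
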